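/- Let M1, M2 be random variables with values in [0,1], let w1, w2 ≥ 0 with w1 + w2 = 1, set M_C := w1·M1 + w2·M2, let A1, A2 be events and e1, e2 ≥ 0. Assume: MCE(M1, A1) ≤ e1 and MCE(M2, A2) ≤ e2; and the conditional independences A1 ⟂ A2 | M_C, A1 ⟂ M_C | M1, and A2 ⟂ M_C | M2 hold. Then the expected calibration error of the weighted-average composition with respect to the conjunction satisfies ECE(w1·M1 + w2·M2, A1 ∩ A2) = E[ |P(A1 ∩ A2 | σ(M_C)) − M_C| ] ≤ max( e1 + e2 + e1·e2 , max(w1, w2) + e1 + e2 − e1·e2 ). -/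

import Mathlib

open MeasureTheory ProbabilityTheory
open scoped ENNReal

/-- The sigma-algebra generated by a random variable. -/
def sigGen {Ω α : Type*} [MeasurableSpace α] (M : Ω → α) : MeasurableSpace Ω :=
  MeasurableSpace.comap M inferInstance

/-- Conditional probability of an event given a sub-sigma-algebra, as a random variable:
`P(A | 𝒢) = E[1_A | 𝒢]`. -/
noncomputable def cprob {Ω : Type*} [MeasurableSpace Ω] (μ : Measure Ω)
    (m : MeasurableSpace Ω) (A : Set Ω) : Ω → ℝ :=
  μ[A.indicator (fun _ => (1 : ℝ)) | m]


lemma core_bilinear {p q w1 w2 : ℝ} (hp0 : 0 ≤ p) (hp1 : p ≤ 1) (hq0 : 0 ≤ q)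
    (hq1 : q ≤ 1) (hw1 : 0 ≤ w1) (hw2 : 0 ≤ w2) (hw : w1 + w2 = 1) :
    |p * q - w1 * p - w2 * q| ≤ max w1 w2 := by
  rcases le_total w1 w2 with h | h
  · rw [max_eq_right h, abs_le]
    constructor <;>
      nlinarith [mul_nonneg hp0 hq0, mul_nonneg (sub_nonneg.2 hp1) (sub_nonneg.2 hq1),
        mul_nonneg hw1 hp0, mul_nonneg hw2 hq0, mul_nonneg hw2 hp0, mul_nonneg hw1 hq0]
  · rw [max_eq_left h, abs_le]
    constructor <;>
      nlinarith [mul_nonneg hp0 hq0, mul_nonneg (sub_nonneg.2 hp1) (sub_nonneg.2 hq1),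
        mul_nonneg hw1 hp0, mul_nonneg hw2 hq0, mul_nonneg hw2 hp0, mul_nonneg hw1 hq0]


/-- Theorem 4.3 (ECE bound for weighted-averaging composition):
`ECE(w1·M1 + w2·M2, A1 ∧ A2) ≤ max(e1 + e2 + e1·e2, max(w1, w2) + e1 + e2 − e1·e2)`. -/
theorem ece_weighted_average_bound
    {Ω : Type*} [MeasurableSpace Ω] (μ : Measure Ω) [IsProbabilityMeasure μ]
    (M1 M2 MC : Ω → ℝ) (hM1 : Measurable M1) (hM2 : Measurable M2)
    (hM1r : ∀ ω, M1 ω ∈ Set.Icc (0 : ℝ) 1) (hM2r : ∀ ω, M2 ω ∈ Set.Icc (0 : ℝ) 1)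
    (w1 w2 : ℝ) (hw1 : 0 ≤ w1) (hw2 : 0 ≤ w2) (hw : w1 + w2 = 1)
    (hMCdef : MC = fun ω => w1 * M1 ω + w2 * M2 ω)
    (A1 A2 : Set Ω) (hA1 : MeasurableSet A1) (hA2 : MeasurableSet A2)
    (e1 e2 : ℝ) (he1 : 0 ≤ e1) (he2 : 0 ≤ e2)
    (hMCE1 : ∀ᵐ ω ∂μ, |cprob μ (sigGen M1) A1 ω - M1 ω| ≤ e1)
    (hMCE2 : ∀ᵐ ω ∂μ, |cprob μ (sigGen M2) A2 ω - M2 ω| ≤ e2)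
    (hCIA : cprob μ (sigGen MC) (A1 ∩ A2) =ᵐ[μ]
      fun ω => cprob μ (sigGen MC) A1 ω * cprob μ (sigGen MC) A2 ω)
    (hCI1 : cprob μ (sigGen (fun ω => (M1 ω, MC ω))) A1 =ᵐ[μ] cprob μ (sigGen M1) A1)
    (hCI2 : cprob μ (sigGen (fun ω => (M2 ω, MC ω))) A2 =ᵐ[μ] cprob μ (sigGen M2) A2) :
    ∫ ω, |cprob μ (sigGen MC) (A1 ∩ A2) ω - MC ω| ∂μ ≤
      max (e1 + e2 + e1 * e2) (max w1 w2 + e1 + e2 - e1 * e2) := by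
  classical
  have hMCm : Measurable MC := by
    rw [hMCdef]; exact (hM1.const_mul w1).add (hM2.const_mul w2)
  have hmC : sigGen MC ≤ ‹MeasurableSpace Ω› := hMCm.comap_le
  haveI hSF : SigmaFinite (μ.trim hmC) := by infer_instance
  -- integrability of the monitors
  have hMint : ∀ (M : Ω → ℝ), Measurable M → (∀ ω, M ω ∈ Set.Icc (0:ℝ) 1) → Integrable M μ := by
    intro M hM hMr
    refine (integrable_const (1:ℝ)).mono' hM.aestronglyMeasurable ?_
    filter_upwards with ω
    rw [Real.norm_eq_abs, abs_le]
    exact ⟨by linarith [(hMr ω).1], (hMr ω).2⟩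
  have hM1int : Integrable M1 μ := hMint M1 hM1 hM1r
  have hM2int : Integrable M2 μ := hMint M2 hM2 hM2r
  have hMCr : ∀ ω, MC ω ∈ Set.Icc (0:ℝ) 1 := by
    intro ω
    simp only [hMCdef, Set.mem_Icc]
    constructor <;>
      nlinarith [(hM1r ω).1, (hM1r ω).2, (hM2r ω).1, (hM2r ω).2]
  have hMCint : Integrable MC μ := hMint MC hMCm hMCr
  -- σ(MC) ≤ σ(Mi, MC)
  have hle : ∀ (M : Ω → ℝ), sigGen MC ≤ sigGen (fun ω => (M ω, MC ω)) := by
    intro M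
    have h1 : sigGen MC
        = MeasurableSpace.comap (fun ω => (M ω, MC ω))
            (MeasurableSpace.comap Prod.snd inferInstance) := by
      rw [MeasurableSpace.comap_comp]; rfl
    rw [h1]
    exact MeasurableSpace.comap_mono measurable_snd.comap_le
  -- tower property: cprob (sigGen MC) Ai = E[cprob (sigGen Mi) Ai | sigGen MC]
  have htower : ∀ (M : Ω → ℝ) (A : Set Ω), Measurable M →
      (cprob μ (sigGen (fun ω => (M ω, MC ω))) A =ᵐ[μ] cprob μ (sigGen M) A) →
      cprob μ (sigGen MC) A =ᵐ[μ] μ[cprob μ (sigGen M) A | sigGen MC] := by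
    intro M A hM hCI
    have hpair : Measurable (fun ω => (M ω, MC ω)) := hM.prodMk hMCm
    have hp2 : sigGen (fun ω => (M ω, MC ω)) ≤ ‹MeasurableSpace Ω› := hpair.comap_le
    haveI : SigmaFinite (μ.trim hp2) := by infer_instance
    have h1 : μ[μ[A.indicator (fun _ => (1:ℝ)) | sigGen (fun ω => (M ω, MC ω))] | sigGen MC]
        =ᵐ[μ] μ[A.indicator (fun _ => (1:ℝ)) | sigGen MC] :=
      condExp_condExp_of_le (hle M) hp2
    exact h1.symm.trans (condExp_congr_ae hCI)
  -- |E[cprob Mi Ai - Mi | MC]| ≤ ei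
  have hkey : ∀ (M : Ω → ℝ) (A : Set Ω) (e : ℝ), Measurable M → Integrable M μ →
      (cprob μ (sigGen (fun ω => (M ω, MC ω))) A =ᵐ[μ] cprob μ (sigGen M) A) →
      (∀ᵐ ω ∂μ, |cprob μ (sigGen M) A ω - M ω| ≤ e) →
      ∀ᵐ ω ∂μ, |cprob μ (sigGen MC) A ω - (μ[M | sigGen MC]) ω| ≤ e := by
    intro M A e hM hMi hCI hMCE
    have ht := htower M A hM hCI
    have hci : Integrable (cprob μ (sigGen M) A) μ := integrable_condExp
    have hsub : μ[cprob μ (sigGen M) A - M | sigGen MC]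
        =ᵐ[μ] μ[cprob μ (sigGen M) A | sigGen MC] - μ[M | sigGen MC] :=
      condExp_sub hci hMi _
    have hub : μ[cprob μ (sigGen M) A - M | sigGen MC] ≤ᵐ[μ] fun _ => e := by
      have h := condExp_mono (m := sigGen MC) (hci.sub hMi) (integrable_const e)
        (hMCE.mono fun ω h => (abs_le.1 h).2)
      calc μ[cprob μ (sigGen M) A - M | sigGen MC] ≤ᵐ[μ] μ[(fun _ => e) | sigGen MC] := h
        _ = fun _ => e := condExp_const hmC e
    have hlb : (fun _ => -e) ≤ᵐ[μ] μ[cprob μ (sigGen M) A - M | sigGen MC] := by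
      have h := condExp_mono (m := sigGen MC) (integrable_const (-e)) (hci.sub hMi)
        (hMCE.mono fun ω h => by
          have := (abs_le.1 h).1
          simpa using this)
      calc (fun _ => -e) = μ[(fun _ => -e) | sigGen MC] := (condExp_const hmC (-e)).symm
        _ ≤ᵐ[μ] _ := h
    filter_upwards [ht, hsub, hub, hlb] with ω h1 h2 h3 h4
    rw [abs_le]
    have h2' : (μ[cprob μ (sigGen M) A - M | sigGen MC]) ω
        = (μ[cprob μ (sigGen M) A | sigGen MC]) ω - (μ[M | sigGen MC]) ω := by
      simpa using h2
    rw [h1]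
    constructor <;> [skip; skip] <;> linarith [h3, h4, h2'.le, h2'.ge]
  have hkey1 := hkey M1 A1 e1 hM1 hM1int hCI1 hMCE1
  have hkey2 := hkey M2 A2 e2 hM2 hM2int hCI2 hMCE2
  -- MC = w1 a + w2 b a.e.
  have hMCsm : StronglyMeasurable[sigGen MC] MC :=
    (Measurable.of_comap_le le_rfl).stronglyMeasurable
  have hMCeq : μ[MC | sigGen MC] = MC := condExp_of_stronglyMeasurable hmC hMCsm hMCint
  have hMCdecomp : MC =ᵐ[μ]
      fun ω => w1 * (μ[M1 | sigGen MC]) ω + w2 * (μ[M2 | sigGen MC]) ω := by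
    have hMC' : MC = w1 • M1 + w2 • M2 := by
      funext ω; simp [hMCdef, smul_eq_mul]
    have hs1 := condExp_smul (μ := μ) (m := sigGen MC) w1 M1
    have hs2 := condExp_smul (μ := μ) (m := sigGen MC) w2 M2
    have hadd := condExp_add (μ := μ) (m := sigGen MC) (f := w1 • M1) (g := w2 • M2)
      (hM1int.smul w1) (hM2int.smul w2)
    have h3 : μ[w1 • M1 + w2 • M2 | sigGen MC] =ᵐ[μ]
        fun ω => w1 * (μ[M1 | sigGen MC]) ω + w2 * (μ[M2 | sigGen MC]) ω := by
      refine hadd.trans ?_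
      filter_upwards [hs1, hs2] with ω h1 h2
      simp only [Pi.add_apply]
      rw [h1, h2]
      simp [smul_eq_mul]
    have h4 : μ[MC | sigGen MC] = μ[w1 • M1 + w2 • M2 | sigGen MC] := by rw [hMC']
    calc MC = μ[w1 • M1 + w2 • M2 | sigGen MC] := by rw [← h4, hMCeq]
      _ =ᵐ[μ] _ := h3
  -- ranges of conditional expectations
  have hcr : ∀ (A : Set Ω), MeasurableSet A →
      ∀ᵐ ω ∂μ, cprob μ (sigGen MC) A ω ∈ Set.Icc (0:ℝ) 1 := by
    intro A hA
    have hind : ∀ ω, A.indicator (fun _ => (1:ℝ)) ω ∈ Set.Icc (0:ℝ) 1 := by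
      intro ω; by_cases h : ω ∈ A <;> simp [Set.indicator_of_mem, Set.indicator_of_notMem, h]
    have h0 : 0 ≤ᵐ[μ] μ[A.indicator (fun _ => (1:ℝ)) | sigGen MC] :=
      condExp_nonneg (Filter.Eventually.of_forall fun ω => (hind ω).1)
    have h1 : μ[A.indicator (fun _ => (1:ℝ)) | sigGen MC] ≤ᵐ[μ] μ[(fun _ => (1:ℝ)) | sigGen MC] :=
      condExp_mono ((integrable_const (1:ℝ)).indicator hA) (integrable_const 1)
        (Filter.Eventually.of_forall fun ω => (hind ω).2)
    filter_upwards [h0, h1] with ω h0 h1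
    refine ⟨h0, ?_⟩
    rwa [condExp_const hmC (1:ℝ)] at h1
  have hmr : ∀ (M : Ω → ℝ), Measurable M → (∀ ω, M ω ∈ Set.Icc (0:ℝ) 1) →
      ∀ᵐ ω ∂μ, (μ[M | sigGen MC]) ω ∈ Set.Icc (0:ℝ) 1 := by
    intro M hM hMr
    have h0 : 0 ≤ᵐ[μ] μ[M | sigGen MC] :=
      condExp_nonneg (Filter.Eventually.of_forall fun ω => (hMr ω).1)
    have h1 : μ[M | sigGen MC] ≤ᵐ[μ] μ[(fun _ => (1:ℝ)) | sigGen MC] :=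
      condExp_mono (hMint M hM hMr) (integrable_const 1)
        (Filter.Eventually.of_forall fun ω => (hMr ω).2)
    filter_upwards [h0, h1] with ω h0 h1
    refine ⟨h0, ?_⟩
    rwa [condExp_const hmC (1:ℝ)] at h1
  -- pointwise bound
  set B := min (1:ℝ) (max w1 w2 + (w1 * e1 + w2 * e2)) with hB
  have hpt : ∀ᵐ ω ∂μ, |cprob μ (sigGen MC) (A1 ∩ A2) ω - MC ω| ≤ B := by
    filter_upwards [hCIA, hkey1, hkey2, hMCdecomp, hcr A1 hA1, hcr A2 hA2,
      hmr M1 hM1 hM1r, hmr M2 hM2 hM2r] with ω hQ h1 h2 hM hr1 hr2 ha hb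
    set p := cprob μ (sigGen MC) A1 ω
    set q := cprob μ (sigGen MC) A2 ω
    set av := (μ[M1 | sigGen MC]) ω
    set bv := (μ[M2 | sigGen MC]) ω
    rw [hQ, hM]
    refine le_min ?_ ?_
    · rw [abs_le]
      constructor <;> nlinarith [mul_nonneg hr1.1 hr2.1, hr1.2, hr2.2,
        mul_le_one₀ hr1.2 hr2.1 hr2.2, mul_nonneg hw1 ha.1, mul_nonneg hw2 hb.1,
        mul_le_mul_of_nonneg_left ha.2 hw1, mul_le_mul_of_nonneg_left hb.2 hw2]
    · have t1 := core_bilinear hr1.1 hr1.2 hr2.1 hr2.2 hw1 hw2 hw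
      have heq : p * q - (w1 * av + w2 * bv)
          = (p * q - w1 * p - w2 * q) + (w1 * (p - av) + w2 * (q - bv)) := by ring
      rw [heq]
      calc |(p * q - w1 * p - w2 * q) + (w1 * (p - av) + w2 * (q - bv))|
          ≤ |p * q - w1 * p - w2 * q| + |w1 * (p - av) + w2 * (q - bv)| := abs_add_le _ _
        _ ≤ max w1 w2 + (w1 * e1 + w2 * e2) := by
            refine add_le_add t1 ?_
            calc |w1 * (p - av) + w2 * (q - bv)|
                ≤ |w1 * (p - av)| + |w2 * (q - bv)| := abs_add_le _ _
              _ = w1 * |p - av| + w2 * |q - bv| := by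
                  rw [abs_mul, abs_mul, abs_of_nonneg hw1, abs_of_nonneg hw2]
              _ ≤ w1 * e1 + w2 * e2 :=
                  add_le_add (mul_le_mul_of_nonneg_left h1 hw1)
                    (mul_le_mul_of_nonneg_left h2 hw2)
  -- integrate
  have hgint : Integrable (fun ω => |cprob μ (sigGen MC) (A1 ∩ A2) ω - MC ω|) μ :=
    (integrable_condExp.sub hMCint).abs
  have hint : ∫ ω, |cprob μ (sigGen MC) (A1 ∩ A2) ω - MC ω| ∂μ ≤ ∫ _, B ∂μ :=
    integral_mono_ae hgint (integrable_const B) hpt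
  rw [integral_const, probReal_univ, one_smul] at hint
  refine hint.trans ?_
  -- numeric comparison
  rcases le_or_gt e1 1 with he1' | he1'
  · rcases le_or_gt e2 1 with he2' | he2'
    · refine le_trans (min_le_right _ _) (le_trans ?_ (le_max_right _ _))
      have key : w1 * e1 + w2 * e2 ≤ e1 + e2 - e1 * e2 := by
        have hw' : w2 = 1 - w1 := by linarith
        rw [hw']
        have k1 : 0 ≤ (1 - w1) * (e1 * (1 - e2)) :=
          mul_nonneg (by linarith) (mul_nonneg he1 (by linarith))
        have k2 : 0 ≤ w1 * (e2 * (1 - e1)) :=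
          mul_nonneg hw1 (mul_nonneg he2 (by linarith))
        nlinarith [k1, k2]
      rcases le_total w1 w2 with h | h
      · rw [max_eq_right h]; linarith
      · rw [max_eq_left h]; linarith
    · refine le_trans (min_le_left _ _) (le_trans ?_ (le_max_left _ _))
      nlinarith [mul_nonneg he1 he2]
  · refine le_trans (min_le_left _ _) (le_trans ?_ (le_max_left _ _))
    nlinarith [mul_nonneg he1 he2]
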